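/- arXiv:2501.01062 — 2 statements merged into one kernel-verified Lean document; each statement's English description precedes it below -/
import Mathlib

section
/- If every vertex in round r+1 references at least f+1 of the at most 2f+1 vertices in round r, and a leader vertex v in round r is referenced by at least f+1 vertices of round r+1 (viewed as the set T), then every vertex of round r+2 (which references at least f+1 vertices of round r+1) references at least one vertex of T, and hence has a path to v. -/
/-- Quorum-intersection step: if every vertex of round `r+2` references at
least `f+1` vertices of round `r+1` (which has at most `2f+1` vertices), and
the leader `v` of round `r` is referenced by a set `T` of at least `f+1`
round-`(r+1)` vertices, then every round-`(r+2)` vertex references some vertex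
of `T`, and hence has a path to `v`. -/
theorem quorum_step_path_to_leader {α : Type*} [DecidableEq α]
    (f : ℕ) (hf : 1 ≤ f)
    (R₁ R₂ : Finset α)  -- rounds r+1 and r+2
    (hR₁lo : f + 1 ≤ R₁.card) (hR₁hi : R₁.card ≤ 2 * f + 1)
    (ref : α → Finset α) (v : α)
    (T : Finset α) (hT : T ⊆ R₁) (hTcard : f + 1 ≤ T.card)
    (hTref : ∀ u ∈ T, v ∈ ref u)
    (href : ∀ w ∈ R₂, ref w ⊆ R₁ ∧ f + 1 ≤ (ref w).card) :
    ∀ w ∈ R₂, ∃ u ∈ T, u ∈ ref w ∧ v ∈ ref u := by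
  intro w hw
  obtain ⟨hsub, hcard⟩ := href w hw
  have hne : ((ref w) ∩ T).Nonempty := by
    rw [← Finset.card_pos]
    have h1 : (ref w ∪ T).card ≤ R₁.card :=
      Finset.card_le_card (Finset.union_subset hsub hT)
    have h2 := Finset.card_union_add_card_inter (ref w) T
    omega
  obtain ⟨u, hu⟩ := hne
  rw [Finset.mem_inter] at hu
  exact ⟨u, hu.2, hu.1, hTref u hu.2⟩
end

section
/- Under reliable broadcast with the Agreement property, if one correct replica adds a vertex v to its DAG (after checking all of v's referenced vertices are present), then eventually every correct replica adds v to its DAG. Proof is by strong induction on rounds: the base case round 0 holds since all correct replicas share identical genesis vertices, and the inductive step follows since v's references lie in earlier rounds. -/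
/-- Under reliable broadcast with the Agreement property, if one correct
replica adds a vertex `v` to its DAG (having checked that all of `v`'s
referenced vertices — which lie in strictly earlier rounds — are present),
then eventually every correct replica adds `v` to its DAG. -/
theorem dag_vertex_agreement {V Rep : Type*}
    (Correct : Rep → Prop)
    (delivered : Rep → V → Prop)  -- eventually reliably delivered
    (adds : Rep → V → Prop)       -- eventually added to local DAG
    (round : V → ℕ) (refs : V → Finset V)
    (hrefs_round : ∀ v, ∀ u ∈ refs v, round u < round v)
    -- RB Agreement: if some correct replica delivers v, all correct replicas do
    (hagree : ∀ v, (∃ p, Correct p ∧ delivered p v) →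
      ∀ q, Correct q → delivered q v)
    -- a correct replica adds only delivered vertices
    (hadd_delivered : ∀ p v, Correct p → adds p v → delivered p v)
    -- a correct replica adds a vertex only after adding all its references
    (hadd_refs : ∀ p v, Correct p → adds p v → ∀ u ∈ refs v, adds p u)
    -- a correct replica eventually adds any delivered vertex whose references
    -- it has added
    (hadd_if : ∀ p v, Correct p → delivered p v →
      (∀ u ∈ refs v, adds p u) → adds p v) :
    ∀ (p q : Rep) (v : V), Correct p → Correct q → adds p v → adds q v := by
  have main : ∀ n v, round v = n → ∀ p q, Correct p → Correct q → adds p v → adds q v := by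
    intro n
    induction n using Nat.strong_induction_on with
    | _ n ih =>
    intro v hn p q hp hq hpv
    refine hadd_if q v hq (hagree v ⟨p, hp, hadd_delivered p v hp hpv⟩ q hq) ?_
    intro u hu
    exact ih (round u) (hn ▸ hrefs_round v u hu) u rfl p q hp hq (hadd_refs p v hp hpv u hu)
  exact fun p q v hp hq h => main (round v) v rfl p q hp hq h
end
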